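/- For distinct odd primes q₁ and q₂, the triple sum Σ_{d mod q₁q₂, gcd(d,q₁q₂)=1} Σ_{s mod q₁q₂} Σ_{t mod q₁q₂} ((4d-s²)(4d-t²)/(q₁q₂)) is at most (q₁-1)(q₂-1), where (·/(q₁q₂)) is the Jacobi symbol. -/

import Mathlib

open Finset

private lemma sum_quadChar_sub_sq' {F : Type*} [Field F] [Fintype F] [DecidableEq F]
    (hF : ringChar F ≠ 2) {a : F} (ha : a ≠ 0) :
    ∑ x : F, quadraticChar F (a - x ^ 2) = - quadraticChar F (-1) := by
  have h1 : ∑ b : F, quadraticChar F (a - b) = 0 := by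
    rw [← quadraticChar_sum_zero hF]
    exact Fintype.sum_equiv (Equiv.subLeft a) _ _ fun b => rfl
  have h2 : ∑ u : F, quadraticChar F (u - 1) = 0 := by
    rw [← quadraticChar_sum_zero hF]
    exact Fintype.sum_equiv (Equiv.subRight (1 : F)) _ _ fun b => rfl
  have step1 : ∑ x : F, quadraticChar F (a - x ^ 2)
      = ∑ b : F, ((#{x : F | x ^ 2 = b}.toFinset : ℤ)) * quadraticChar F (a - b) := by
    rw [← Finset.sum_fiberwise_of_maps_to' (fun x _ => mem_univ ((x : F) ^ 2))
      (fun b => quadraticChar F (a - b))]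
    refine Finset.sum_congr rfl fun b _ => ?_
    rw [Finset.sum_const, nsmul_eq_mul]
    congr 1
    rw [Set.toFinset_setOf]
  have step2 : ∀ b : F, ((#{x : F | x ^ 2 = b}.toFinset : ℤ)) * quadraticChar F (a - b)
      = quadraticChar F b * quadraticChar F (a - b) + quadraticChar F (a - b) := by
    intro b
    rw [quadraticChar_card_sqrts hF b]
    ring
  rw [step1]
  simp_rw [step2]
  rw [Finset.sum_add_distrib, h1, add_zero]
  have key : ∀ b ∈ (univ : Finset F).erase 0,
      quadraticChar F b * quadraticChar F (a - b) = quadraticChar F (a * b⁻¹ - 1) := by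
    intro b hb
    have hb0 : b ≠ 0 := Finset.ne_of_mem_erase hb
    rw [← map_mul]
    have : b * (a - b) = b ^ 2 * (a * b⁻¹ - 1) := by
      field_simp
    rw [this, map_mul, quadraticChar_sq_one' hb0, one_mul]
  have herase : ∑ b : F, quadraticChar F b * quadraticChar F (a - b)
      = ∑ b ∈ (univ : Finset F).erase 0, quadraticChar F b * quadraticChar F (a - b) := by
    rw [Finset.sum_erase _ (by simp)]
  rw [herase, Finset.sum_congr rfl key]
  have hbij : ∑ b ∈ (univ : Finset F).erase 0, quadraticChar F (a * b⁻¹ - 1)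
      = ∑ u ∈ (univ : Finset F).erase 0, quadraticChar F (u - 1) := by
    refine Finset.sum_nbij' (fun b => a * b⁻¹) (fun u => a * u⁻¹) ?_ ?_ ?_ ?_ ?_
    · intro b hb
      have hb0 : b ≠ 0 := Finset.ne_of_mem_erase hb
      simp [Finset.mem_erase, ha, hb0]
    · intro u hu
      have hu0 : u ≠ 0 := Finset.ne_of_mem_erase hu
      simp [Finset.mem_erase, ha, hu0]
    · intro b hb
      have hb0 : b ≠ 0 := Finset.ne_of_mem_erase hb
      field_simp
    · intro u hu
      have hu0 : u ≠ 0 := Finset.ne_of_mem_erase hu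
      field_simp
    · intro b hb; rfl
  rw [hbij]
  rw [Finset.sum_erase_eq_sub (Finset.mem_univ (0 : F)), h2]
  simp

private lemma sum_crt_factor' {q₁ q₂ : ℕ} [NeZero q₁] [NeZero q₂] (h : Nat.Coprime q₁ q₂)
    (f : ZMod q₁ → ℤ) (g : ZMod q₂ → ℤ) :
    ∑ s : ZMod (q₁ * q₂),
        f (ZMod.castHom (dvd_mul_right q₁ q₂) (ZMod q₁) s) *
        g (ZMod.castHom (dvd_mul_left q₂ q₁) (ZMod q₂) s) =
      (∑ x : ZMod q₁, f x) * (∑ y : ZMod q₂, g y) := by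
  rw [Finset.sum_mul_sum]
  rw [show (∑ i : ZMod q₁, ∑ j : ZMod q₂, f i * g j)
      = ∑ p : ZMod q₁ × ZMod q₂, f p.1 * g p.2 from
    (Fintype.sum_prod_type (fun p : ZMod q₁ × ZMod q₂ => f p.1 * g p.2)).symm]
  exact Fintype.sum_equiv (ZMod.chineseRemainder h) _ _ fun s => by
    have h1 : ((ZMod.chineseRemainder h).toEquiv s).1
        = ZMod.castHom (dvd_mul_right q₁ q₂) (ZMod q₁) s := by
      simp [ZMod.chineseRemainder, ZMod.castHom_apply, Prod.fst_zmod_cast]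
    have h2 : ((ZMod.chineseRemainder h).toEquiv s).2
        = ZMod.castHom (dvd_mul_left q₂ q₁) (ZMod q₂) s := by
      simp [ZMod.chineseRemainder, ZMod.castHom_apply, Prod.snd_zmod_cast]
    rw [← h1, ← h2]; rfl

/-- For distinct odd primes `q₁, q₂`, the triple character sum
`∑_{d unit} ∑_s ∑_t ((4d-s²)(4d-t²) / q₁q₂)` is at most `(q₁-1)(q₂-1)`. -/
theorem triple_jacobi_sum_le (q₁ q₂ : ℕ) (hq₁ : q₁.Prime) (hq₂ : q₂.Prime)
    (hodd₁ : Odd q₁) (hodd₂ : Odd q₂) (hne : q₁ ≠ q₂) :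
    haveI : NeZero (q₁ * q₂) := ⟨Nat.mul_ne_zero hq₁.pos.ne' hq₂.pos.ne'⟩
    (∑ d : (ZMod (q₁ * q₂))ˣ, ∑ s : ZMod (q₁ * q₂), ∑ t : ZMod (q₁ * q₂),
        jacobiSym ((4 * ((d : ZMod (q₁ * q₂)).val : ℤ) - (s.val : ℤ) ^ 2) *
          (4 * ((d : ZMod (q₁ * q₂)).val : ℤ) - (t.val : ℤ) ^ 2)) (q₁ * q₂)) ≤
      ((q₁ : ℤ) - 1) * ((q₂ : ℤ) - 1) := by
  haveI : Fact q₁.Prime := ⟨hq₁⟩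
  haveI : Fact q₂.Prime := ⟨hq₂⟩
  haveI : NeZero q₁ := ⟨hq₁.pos.ne'⟩
  haveI : NeZero q₂ := ⟨hq₂.pos.ne'⟩
  haveI : NeZero (q₁ * q₂) := ⟨Nat.mul_ne_zero hq₁.pos.ne' hq₂.pos.ne'⟩
  have hco : Nat.Coprime q₁ q₂ := (Nat.coprime_primes hq₁ hq₂).mpr hne
  have hq₁2 : q₁ ≠ 2 := by rintro rfl; exact (Nat.not_odd_iff_even.mpr even_two) hodd₁
  have hq₂2 : q₂ ≠ 2 := by rintro rfl; exact (Nat.not_odd_iff_even.mpr even_two) hodd₂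
  have hchar₁ : ringChar (ZMod q₁) ≠ 2 := by rw [ZMod.ringChar_zmod_n]; exact hq₁2
  have hchar₂ : ringChar (ZMod q₂) ≠ 2 := by rw [ZMod.ringChar_zmod_n]; exact hq₂2
  have hfour : ∀ (q : ℕ) [Fact q.Prime], q ≠ 2 → (4 : ZMod q) ≠ 0 := by
    intro q _ hq2 h4
    have : ((4 : ℕ) : ZMod q) = 0 := by exact_mod_cast h4
    rw [ZMod.natCast_eq_zero_iff] at this
    have h2 : q ∣ 2 := (Fact.out : q.Prime).dvd_of_dvd_pow (show q ∣ 2 ^ 2 by norm_num at this ⊢; exact this)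
    exact hq2 ((Nat.prime_dvd_prime_iff_eq Fact.out Nat.prime_two).mp h2)
  have hjac : ∀ a : ℤ, jacobiSym a (q₁ * q₂)
      = quadraticChar (ZMod q₁) ((a : ZMod q₁)) * quadraticChar (ZMod q₂) ((a : ZMod q₂)) := by
    intro a
    rw [jacobiSym.mul_right, ← jacobiSym.legendreSym.to_jacobiSym, ← jacobiSym.legendreSym.to_jacobiSym]
    rfl
  -- evaluate inner double sum for each unit d
  have hinner : ∀ d : (ZMod (q₁ * q₂))ˣ,
      (∑ s : ZMod (q₁ * q₂), ∑ t : ZMod (q₁ * q₂),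
        jacobiSym ((4 * ((d : ZMod (q₁ * q₂)).val : ℤ) - (s.val : ℤ) ^ 2) *
          (4 * ((d : ZMod (q₁ * q₂)).val : ℤ) - (t.val : ℤ) ^ 2)) (q₁ * q₂)) = 1 := by
    intro d
    set D : ℤ := ((d : ZMod (q₁ * q₂)).val : ℤ) with hD
    have hsplit : ∀ s t : ZMod (q₁ * q₂),
        jacobiSym ((4 * D - (s.val : ℤ) ^ 2) * (4 * D - (t.val : ℤ) ^ 2)) (q₁ * q₂)
        = jacobiSym (4 * D - (s.val : ℤ) ^ 2) (q₁ * q₂) *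
          jacobiSym (4 * D - (t.val : ℤ) ^ 2) (q₁ * q₂) := fun s t => jacobiSym.mul_left _ _ _
    simp_rw [hsplit, ← Finset.mul_sum, ← Finset.sum_mul]
    -- evaluate the single sum
    set c₁ : ZMod q₁ := 4 * (ZMod.castHom (dvd_mul_right q₁ q₂) (ZMod q₁) (d : ZMod (q₁ * q₂)))
    set c₂ : ZMod q₂ := 4 * (ZMod.castHom (dvd_mul_left q₂ q₁) (ZMod q₂) (d : ZMod (q₁ * q₂)))
    have hc₁ : c₁ ≠ 0 := by
      apply mul_ne_zero (hfour q₁ hq₁2)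
      exact ((d.isUnit.map (ZMod.castHom (dvd_mul_right q₁ q₂) (ZMod q₁)))).ne_zero
    have hc₂ : c₂ ≠ 0 := by
      apply mul_ne_zero (hfour q₂ hq₂2)
      exact ((d.isUnit.map (ZMod.castHom (dvd_mul_left q₂ q₁) (ZMod q₂)))).ne_zero
    have hcast₁ : ∀ s : ZMod (q₁ * q₂),
        ((4 * D - (s.val : ℤ) ^ 2 : ℤ) : ZMod q₁)
          = c₁ - (ZMod.castHom (dvd_mul_right q₁ q₂) (ZMod q₁) s) ^ 2 := by
      intro s
      push_cast [hD]
      rw [ZMod.natCast_val, ZMod.natCast_val]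
      rfl
    have hcast₂ : ∀ s : ZMod (q₁ * q₂),
        ((4 * D - (s.val : ℤ) ^ 2 : ℤ) : ZMod q₂)
          = c₂ - (ZMod.castHom (dvd_mul_left q₂ q₁) (ZMod q₂) s) ^ 2 := by
      intro s
      push_cast [hD]
      rw [ZMod.natCast_val, ZMod.natCast_val]
      rfl
    have hS : (∑ s : ZMod (q₁ * q₂), jacobiSym (4 * D - (s.val : ℤ) ^ 2) (q₁ * q₂))
        = (∑ x : ZMod q₁, quadraticChar (ZMod q₁) (c₁ - x ^ 2)) *
          (∑ y : ZMod q₂, quadraticChar (ZMod q₂) (c₂ - y ^ 2)) := by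
      rw [← sum_crt_factor' hco (fun x => quadraticChar (ZMod q₁) (c₁ - x ^ 2))
        (fun y => quadraticChar (ZMod q₂) (c₂ - y ^ 2))]
      refine Finset.sum_congr rfl fun s _ => ?_
      rw [hjac, hcast₁ s, hcast₂ s]
    rw [hS, sum_quadChar_sub_sq' hchar₁ hc₁, sum_quadChar_sub_sq' hchar₂ hc₂]
    have hm1 : (-1 : ZMod q₁) ≠ 0 := neg_ne_zero.mpr one_ne_zero
    have hm1' : (-1 : ZMod q₂) ≠ 0 := neg_ne_zero.mpr one_ne_zero
    have e1 := quadraticChar_sq_one hm1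
    have e2 := quadraticChar_sq_one hm1'
    nlinarith [e1, e2]
  calc (∑ d : (ZMod (q₁ * q₂))ˣ, ∑ s : ZMod (q₁ * q₂), ∑ t : ZMod (q₁ * q₂),
        jacobiSym ((4 * ((d : ZMod (q₁ * q₂)).val : ℤ) - (s.val : ℤ) ^ 2) *
          (4 * ((d : ZMod (q₁ * q₂)).val : ℤ) - (t.val : ℤ) ^ 2)) (q₁ * q₂))
      = ∑ _d : (ZMod (q₁ * q₂))ˣ, (1 : ℤ) := Finset.sum_congr rfl fun d _ => hinner d
    _ = (Fintype.card (ZMod (q₁ * q₂))ˣ : ℤ) := by simp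
    _ = ((q₁ : ℤ) - 1) * ((q₂ : ℤ) - 1) := by
        rw [ZMod.card_units_eq_totient, Nat.totient_mul hco, Nat.totient_prime hq₁,
          Nat.totient_prime hq₂]
        push_cast [Nat.cast_sub hq₁.one_le, Nat.cast_sub hq₂.one_le]
        ring
    _ ≤ ((q₁ : ℤ) - 1) * ((q₂ : ℤ) - 1) := le_refl _
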